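/- Let d be a positive natural number, σ > 0, and for x ∈ ℝ^d let μ_x denote the isotropic Gaussian measure N(x, σ²I_d). Let S ⊆ ℝ^d be a measurable set, x, δ ∈ ℝ^d, and a ∈ ℝ. If μ_x(S) ≥ Φ(a), then μ_{x+δ}(S) ≥ Φ(a − ‖δ‖₂/σ). -/

import Mathlib

open MeasureTheory ProbabilityTheory Set
open scoped RealInnerProductSpace NNReal ENNReal

/-- The isotropic Gaussian measure `N(x, σ²I_d)` on `ℝ^d`. -/
noncomputable def gaussPi (d : ℕ) (σ : ℝ) (x : EuclideanSpace ℝ (Fin d)) :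
    Measure (EuclideanSpace ℝ (Fin d)) :=
  Measure.map (MeasurableEquiv.toLp 2 (Fin d → ℝ))
    (Measure.pi fun i => gaussianReal (x i) ⟨σ ^ 2, sq_nonneg σ⟩)

/-- The standard normal cumulative distribution function `Φ`. -/
noncomputable def stdNormalCDF (t : ℝ) : ℝ :=
  (gaussianReal 0 1 (Set.Iic t)).toReal

namespace GaussShiftAux

open Real

instance instIsProbGaussSub (μ : ℝ) (v : {r : ℝ // 0 ≤ r}) :
    IsProbabilityMeasure (gaussianReal μ v) := instIsProbabilityMeasureGaussianReal μ v

lemma lintegral_pi_prod {n : ℕ} (μ : Fin n → Measure ℝ) [∀ i, SigmaFinite (μ i)]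
    (f : Fin n → ℝ → ℝ≥0∞) (hf : ∀ i, Measurable (f i)) :
    ∫⁻ x, ∏ i, f i (x i) ∂Measure.pi μ = ∏ i, ∫⁻ y, f i y ∂μ i := by
  induction n with
  | zero => simp [Measure.pi_univ]
  | succ n ih =>
    have hmeas : Measurable fun x : Fin (n+1) → ℝ => ∏ i, f i (x i) :=
      Finset.measurable_prod _ fun i _ => (hf i).comp (measurable_pi_apply i)
    rw [← ((measurePreserving_piFinSuccAbove μ 0).symm).lintegral_comp hmeas]
    simp_rw [MeasurableEquiv.piFinSuccAbove_symm_apply, Fin.insertNthEquiv,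
      Fin.prod_univ_succ, Fin.insertNth_zero, Equiv.coe_fn_mk, Fin.cons_zero, Fin.cons_succ,
      Fin.zero_succAbove, cast_eq]
    have h2 : Measurable fun y : Fin n → ℝ => ∏ i : Fin n, f i.succ (y i) :=
      Finset.measurable_prod _ fun i _ => (hf i.succ).comp (measurable_pi_apply i)
    have key := lintegral_prod_mul (μ := μ 0)
      (ν := Measure.pi fun j : Fin n => μ ((0 : Fin (n+1)).succAbove j))
      (f := f 0) (g := fun y : Fin n → ℝ => ∏ i : Fin n, f i.succ (y i))
      (hf 0).aemeasurable h2.aemeasurable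
    simp only [Fin.zero_succAbove] at key
    rw [key, ih _ _ (fun i => hf i.succ)]

lemma pi_withDensity {n : ℕ} (μ ν : Fin n → Measure ℝ) [∀ i, SigmaFinite (μ i)]
    [∀ i, SigmaFinite (ν i)] (f : Fin n → ℝ → ℝ≥0∞) (hf : ∀ i, Measurable (f i))
    (hν : ∀ i, ν i = (μ i).withDensity (f i)) :
    Measure.pi ν = (Measure.pi μ).withDensity fun x => ∏ i, f i (x i) := by
  refine Measure.pi_eq fun s hs => ?_
  rw [withDensity_apply _ (MeasurableSet.univ_pi hs),
    ← lintegral_indicator (MeasurableSet.univ_pi hs) _]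
  have key : ∀ x : Fin n → ℝ, (Set.pi univ s).indicator (fun x => ∏ i, f i (x i)) x
      = ∏ i, (s i).indicator (f i) (x i) := by
    intro x
    by_cases hx : x ∈ Set.pi univ s
    · rw [indicator_of_mem hx]
      exact Finset.prod_congr rfl fun i _ => (indicator_of_mem (hx i (mem_univ i)) _).symm
    · rw [indicator_of_notMem hx]
      rw [mem_univ_pi] at hx; push_neg at hx
      obtain ⟨i, hi⟩ := hx
      exact (Finset.prod_eq_zero (Finset.mem_univ i) (indicator_of_notMem hi _)).symm
  simp_rw [key]
  rw [lintegral_pi_prod μ _ (fun i => (hf i).indicator (hs i))]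
  exact Finset.prod_congr rfl fun i _ => by
    rw [lintegral_indicator (hs i) _, ← withDensity_apply _ (hs i), hν i]

lemma gauss_shift_1d {σ : ℝ} (hσ : 0 < σ) (m c : ℝ) :
    gaussianReal (m + c) ⟨σ^2, sq_nonneg σ⟩
      = (gaussianReal m ⟨σ^2, sq_nonneg σ⟩).withDensity
        (fun y => ENNReal.ofReal (Real.exp (c*(y-m)/σ^2 - c^2/(2*σ^2)))) := by
  have hσ2 : σ^2 ≠ 0 := (pow_pos hσ 2).ne'
  have hv : (⟨σ^2, sq_nonneg σ⟩ : ℝ≥0) ≠ 0 := by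
    intro h; exact hσ2 (congrArg NNReal.toReal h)
  have hmeas : Measurable fun y : ℝ => ENNReal.ofReal (Real.exp (c*(y-m)/σ^2 - c^2/(2*σ^2))) := by
    fun_prop
  rw [gaussianReal_of_var_ne_zero _ hv, gaussianReal_of_var_ne_zero _ hv,
    ← withDensity_mul _ (measurable_gaussianPDF m ⟨σ^2, sq_nonneg σ⟩) hmeas]
  congr 1
  funext y
  simp only [Pi.mul_apply, gaussianPDF]
  rw [← ENNReal.ofReal_mul (gaussianPDFReal_nonneg m ⟨σ^2, sq_nonneg σ⟩ y)]
  congr 1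
  simp only [gaussianPDFReal, NNReal.coe_mk]
  change (√(2 * π * σ^2))⁻¹ * rexp (-(y - (m + c)) ^ 2 / (2 * σ^2)) =
    (√(2 * π * σ^2))⁻¹ * rexp (-(y - m) ^ 2 / (2 * σ^2)) * rexp (c * (y - m) / σ ^ 2 - c ^ 2 / (2 * σ ^ 2))
  have hexp : -(y - (m+c))^2/(2*σ^2)
      = -(y-m)^2/(2*σ^2) + (c*(y-m)/σ^2 - c^2/(2*σ^2)) := by
    field_simp
    ring
  rw [hexp, Real.exp_add]
  ring

lemma gauss_Iic {σ : ℝ} (hσ : 0 < σ) (m b : ℝ) :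
    gaussianReal m ⟨σ^2, sq_nonneg σ⟩ (Set.Iic (m + σ*b)) = ENNReal.ofReal (stdNormalCDF b) := by
  have h1 : (gaussianReal 0 1).map (fun y => σ*y + m) = gaussianReal m ⟨σ^2, sq_nonneg σ⟩ := by
    have : (fun y => σ*y + m) = (· + m) ∘ (σ * ·) := rfl
    rw [this, ← Measure.map_map (measurable_add_const m) (measurable_const_mul σ),
      gaussianReal_map_const_mul, gaussianReal_map_add_const]
    norm_num
    rfl
  rw [← h1, Measure.map_apply (by fun_prop) measurableSet_Iic]
  have h2 : (fun y => σ*y + m) ⁻¹' Set.Iic (m + σ*b) = Set.Iic b := by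
    ext y
    simp only [Set.mem_preimage, Set.mem_Iic]
    constructor
    · intro h; nlinarith
    · intro h; nlinarith
  rw [h2, stdNormalCDF, ENNReal.ofReal_toReal (measure_ne_top _ _)]

lemma np_core {d : ℕ} (hd : 0 < d) {σ : ℝ} (hσ : 0 < σ) (m : Fin d → ℝ) (t : ℝ) (ht : 0 ≤ t)
    (S : Set (Fin d → ℝ)) (hS : MeasurableSet S) (a : ℝ)
    (h : ENNReal.ofReal (stdNormalCDF a)
      ≤ Measure.pi (fun i => gaussianReal (m i) ⟨σ^2, sq_nonneg σ⟩) S) :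
    ENNReal.ofReal (stdNormalCDF (a - t/σ))
      ≤ Measure.pi (fun i => gaussianReal
          (m i + (if i = (⟨0, hd⟩ : Fin d) then t else 0)) ⟨σ^2, sq_nonneg σ⟩) S := by
  set z0 : Fin d := ⟨0, hd⟩
  set V : ℝ≥0 := ⟨σ^2, sq_nonneg σ⟩ with hV
  set ν := Measure.pi (fun i => gaussianReal (m i) V) with hνdef
  set ν' := Measure.pi (fun i => gaussianReal (m i + (if i = z0 then t else 0)) V) with hν'def
  haveI : IsProbabilityMeasure ν := by rw [hνdef]; infer_instance
  haveI : IsProbabilityMeasure ν' := by rw [hν'def]; infer_instance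
  set L : (Fin d → ℝ) → ℝ≥0∞ :=
    fun x => ENNReal.ofReal (Real.exp (t*(x z0 - m z0)/σ^2 - t^2/(2*σ^2))) with hLdef
  have hLmeas : Measurable L := by
    apply Measurable.ennreal_ofReal
    fun_prop
  have hwd : ν' = ν.withDensity L := by
    rw [hν'def, hνdef,
      pi_withDensity _ _ (fun i => fun y =>
        ENNReal.ofReal (Real.exp ((if i = z0 then t else 0)*(y - m i)/σ^2
          - (if i = z0 then t else 0)^2/(2*σ^2))))
        (fun i => by apply Measurable.ennreal_ofReal; fun_prop)
        (fun i => gauss_shift_1d hσ (m i) _)]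
    congr 1
    funext x
    have hterm : ∀ i : Fin d,
        ENNReal.ofReal (Real.exp ((if i = z0 then t else 0)*(x i - m i)/σ^2
          - (if i = z0 then t else 0)^2/(2*σ^2))) = if i = z0 then L x else 1 := by
      intro i
      by_cases hi : i = z0
      · subst hi; simp [hLdef]
      · simp [hi]
    rw [Finset.prod_congr rfl (fun i _ => hterm i), Finset.prod_ite_eq' Finset.univ z0
      (fun _ => L x)]
    simp
  set A : Set (Fin d → ℝ) := (fun x => x z0) ⁻¹' (Set.Iic (m z0 + σ * a)) with hAdef
  have hA : MeasurableSet A := (measurable_pi_apply z0) measurableSet_Iic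
  have pi_halfspace : ∀ (q : ℝ) (μs : Fin d → Measure ℝ) (_ : ∀ i, IsProbabilityMeasure (μs i)),
      Measure.pi μs ((fun x => x z0) ⁻¹' (Set.Iic q)) = μs z0 (Set.Iic q) := by
    intro q μs hprob
    have hset : (fun x : Fin d → ℝ => x z0) ⁻¹' (Set.Iic q)
        = Set.pi univ (fun i => if i = z0 then Set.Iic q else univ) := by
      ext x
      simp only [Set.mem_preimage, Set.mem_pi, Set.mem_univ, forall_true_left]
      constructor
      · intro hx i
        by_cases hi : i = z0
        · subst hi; simpa using hx
        · simp [hi]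
      · intro hx
        have := hx z0
        simpa using this
    rw [hset, Measure.pi_pi]
    have : ∀ i : Fin d, μs i (if i = z0 then Set.Iic q else univ)
        = if i = z0 then μs z0 (Set.Iic q) else 1 := by
      intro i
      by_cases hi : i = z0
      · subst hi; simp
      · simp [hi, (hprob i).measure_univ]
    rw [Finset.prod_congr rfl (fun i _ => this i), Finset.prod_ite_eq' Finset.univ z0
      (fun _ => μs z0 (Set.Iic q))]
    simp
  have hνA : ν A = ENNReal.ofReal (stdNormalCDF a) := by
    rw [hνdef, pi_halfspace _ _ (fun i => inferInstance), gauss_Iic hσ]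
  have hν'A : ν' A = ENNReal.ofReal (stdNormalCDF (a - t/σ)) := by
    rw [hν'def, pi_halfspace _ _ (fun i => inferInstance)]
    have : m z0 + σ * a = (m z0 + (if z0 = z0 then t else 0)) + σ * (a - t/σ) := by
      simp only [↓reduceIte]
      field_simp
      ring
    rw [this, gauss_Iic hσ]
  set k : ℝ≥0∞ := ENNReal.ofReal (Real.exp (t*(σ*a)/σ^2 - t^2/(2*σ^2))) with hkdef
  have hbound_in : ∀ x ∈ A, L x ≤ k := by
    intro x hx
    apply ENNReal.ofReal_le_ofReal
    apply Real.exp_le_exp.mpr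
    have hxA : x z0 ≤ m z0 + σ * a := hx
    have hx' : x z0 - m z0 ≤ σ * a := by linarith
    have : t * (x z0 - m z0) / σ^2 ≤ t * (σ * a) / σ^2 := by gcongr
    linarith
  have hbound_out : ∀ x ∉ A, k ≤ L x := by
    intro x hx
    apply ENNReal.ofReal_le_ofReal
    apply Real.exp_le_exp.mpr
    have hx' : σ * a ≤ x z0 - m z0 := by
      simp only [hAdef, Set.mem_preimage, Set.mem_Iic, not_le] at hx
      linarith
    have : t * (σ * a) / σ^2 ≤ t * (x z0 - m z0) / σ^2 := by gcongr
    linarith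
  have hAS : ν A ≤ ν S := hνA ▸ h
  have hdiff : ν (A \ S) ≤ ν (S \ A) := by
    have h1 : ν (A \ S) + ν (A ∩ S) = ν A := measure_diff_add_inter A hS
    have h2 : ν (S \ A) + ν (S ∩ A) = ν S := measure_diff_add_inter S hA
    have key : ν (A \ S) + ν (A ∩ S) ≤ ν (S \ A) + ν (A ∩ S) := by
      calc ν (A \ S) + ν (A ∩ S) = ν A := h1
        _ ≤ ν S := hAS
        _ = ν (S \ A) + ν (S ∩ A) := h2.symm
        _ = ν (S \ A) + ν (A ∩ S) := by rw [Set.inter_comm S A]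
    exact (ENNReal.add_le_add_iff_right (measure_ne_top ν (A ∩ S))).mp key
  rw [← hν'A, hwd, withDensity_apply _ hA, withDensity_apply _ hS]
  calc ∫⁻ x in A, L x ∂ν
      = ∫⁻ x in A ∩ S, L x ∂ν + ∫⁻ x in A \ S, L x ∂ν := by
        rw [← lintegral_union (hA.diff hS) (Disjoint.symm (@Set.disjoint_sdiff_inter _ A S)),
          Set.inter_union_diff]
    _ ≤ ∫⁻ x in A ∩ S, L x ∂ν + k * ν (A \ S) := by
        have hle : ∫⁻ x in A \ S, L x ∂ν ≤ ∫⁻ _ in A \ S, k ∂ν :=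
          setLIntegral_mono' (hA.diff hS) (fun x hx => hbound_in x hx.1)
        rw [setLIntegral_const] at hle
        exact add_le_add_right hle _
    _ ≤ ∫⁻ x in A ∩ S, L x ∂ν + k * ν (S \ A) :=
        add_le_add_right (mul_le_mul_right hdiff k) _
    _ ≤ ∫⁻ x in A ∩ S, L x ∂ν + ∫⁻ x in S \ A, L x ∂ν := by
        have hle : ∫⁻ _ in S \ A, k ∂ν ≤ ∫⁻ x in S \ A, L x ∂ν :=
          setLIntegral_mono' (hS.diff hA) (fun x hx => hbound_out x hx.2)
        rw [setLIntegral_const] at hle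
        exact add_le_add_right hle _
    _ = ∫⁻ x in S, L x ∂ν := by
        rw [Set.inter_comm A S,
          ← lintegral_union (hS.diff hA) (Disjoint.symm (@Set.disjoint_sdiff_inter _ S A)),
          Set.inter_union_diff]

lemma map_withDensity_equiv {α β} [MeasurableSpace α] [MeasurableSpace β] (e : α ≃ᵐ β)
    (μ : Measure α) (f : α → ℝ≥0∞) (hf : Measurable f) :
    Measure.map e (μ.withDensity f) = (Measure.map e μ).withDensity (fun y => f (e.symm y)) := by
  ext s hs
  rw [Measure.map_apply e.measurable hs, withDensity_apply _ (e.measurable hs),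
    withDensity_apply _ hs,
    setLIntegral_map (f := fun y => f (e.symm y)) hs (hf.comp e.symm.measurable) e.measurable]
  simp

lemma gaussPi_withDensity (d : ℕ) {σ : ℝ} (hσ : 0 < σ) (x : EuclideanSpace ℝ (Fin d)) :
    gaussPi d σ x = (volume : Measure (EuclideanSpace ℝ (Fin d))).withDensity
      (fun z => ENNReal.ofReal ((Real.sqrt (2*π*σ^2))⁻¹ ^ d * rexp (-‖z - x‖^2/(2*σ^2)))) := by
  have hσ2 : σ^2 ≠ 0 := (pow_pos hσ 2).ne'
  have hv : (⟨σ^2, sq_nonneg σ⟩ : ℝ≥0) ≠ 0 := fun h => hσ2 (congrArg NNReal.toReal h)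
  rw [gaussPi, pi_withDensity (fun _ => (volume : Measure ℝ)) _
    (fun i => gaussianPDF (x i) ⟨σ^2, sq_nonneg σ⟩)
    (fun i => measurable_gaussianPDF _ _)
    (fun i => gaussianReal_of_var_ne_zero _ hv),
    map_withDensity_equiv (MeasurableEquiv.toLp 2 (Fin d → ℝ)) _
      (fun w => ∏ i, gaussianPDF (x i) ⟨σ^2, sq_nonneg σ⟩ (w i))
      (Finset.measurable_prod _ fun i _ =>
        (measurable_gaussianPDF _ _).comp (measurable_pi_apply i))]
  have hvol : Measure.map (MeasurableEquiv.toLp 2 (Fin d → ℝ))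
      (Measure.pi fun _ : Fin d => (volume : Measure ℝ)) = volume := by
    rw [← volume_pi]
    exact ((EuclideanSpace.volume_preserving_symm_measurableEquiv_toLp (Fin d)).symm _).map_eq
  rw [hvol]
  congr 1
  funext z
  have happ : ∀ i : Fin d,
      ((MeasurableEquiv.toLp 2 (Fin d → ℝ)).symm z) i = z i := fun i => rfl
  simp_rw [happ]
  simp only [gaussianPDF]
  rw [← ENNReal.ofReal_prod_of_nonneg (s := Finset.univ)
    (f := fun i => gaussianPDFReal (x i) ⟨σ^2, sq_nonneg σ⟩ (z i))
    (fun i _ => gaussianPDFReal_nonneg _ _ _)]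
  congr 1
  simp only [gaussianPDFReal, NNReal.coe_mk]
  rw [Finset.prod_mul_distrib, Finset.prod_const, Finset.card_univ, Fintype.card_fin,
    ← Real.exp_sum]
  congr 1
  rw [← Finset.sum_div]
  congr 2
  have hn : ‖z - x‖^2 = ∑ i, (z i - x i)^2 := by
    rw [EuclideanSpace.norm_eq, Real.sq_sqrt (Finset.sum_nonneg fun i _ => sq_nonneg _)]
    refine Finset.sum_congr rfl fun i _ => ?_
    rw [PiLp.sub_apply, Real.norm_eq_abs, sq_abs]
  rw [hn, ← Finset.sum_neg_distrib]

lemma gaussPi_map_isometry {d : ℕ} {σ : ℝ} (hσ : 0 < σ) (x : EuclideanSpace ℝ (Fin d))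
    (R : EuclideanSpace ℝ (Fin d) ≃ₗᵢ[ℝ] EuclideanSpace ℝ (Fin d)) :
    Measure.map R (gaussPi d σ x) = gaussPi d σ (R x) := by
  rw [gaussPi_withDensity d hσ x, gaussPi_withDensity d hσ (R x)]
  have hmeas : Measurable fun z : EuclideanSpace ℝ (Fin d) =>
      ENNReal.ofReal ((Real.sqrt (2*π*σ^2))⁻¹ ^ d * rexp (-‖z - x‖^2/(2*σ^2))) := by
    apply Measurable.ennreal_ofReal
    fun_prop
  have hco : ⇑R = ⇑(R.toHomeomorph.toMeasurableEquiv) := rfl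
  rw [hco, map_withDensity_equiv _ _ _ hmeas]
  have hvol : Measure.map (⇑(R.toHomeomorph.toMeasurableEquiv)) volume
      = (volume : Measure (EuclideanSpace ℝ (Fin d))) := R.measurePreserving.map_eq
  rw [hvol]
  congr 1
  funext z
  have hsymm : (R.toHomeomorph.toMeasurableEquiv).symm z = R.symm z := rfl
  rw [hsymm]
  have hnorm : ‖R.symm z - x‖ = ‖z - R x‖ := by
    rw [← R.norm_map (R.symm z - x), map_sub, R.apply_symm_apply]
  rw [hnorm]
  rfl

end GaussShiftAux

open GaussShiftAux

theorem gaussian_shift_lower_bound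
    (d : ℕ) (hd : 0 < d) (σ : ℝ) (hσ : 0 < σ)
    (S : Set (EuclideanSpace ℝ (Fin d))) (hS : MeasurableSet S)
    (x δ : EuclideanSpace ℝ (Fin d)) (a : ℝ)
    (h : (gaussPi d σ x S).toReal ≥ stdNormalCDF a) :
    (gaussPi d σ (x + δ) S).toReal ≥ stdNormalCDF (a - ‖δ‖ / σ) := by
  classical
  by_cases hδ : δ = 0
  · subst hδ
    simpa using h
  set t : ℝ := ‖δ‖ with htdef
  have ht : 0 < t := norm_pos_iff.mpr hδ
  set z0 : Fin d := ⟨0, hd⟩ with hz0def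
  set u : EuclideanSpace ℝ (Fin d) := t⁻¹ • δ with hudef
  have hu : ‖u‖ = 1 := by
    rw [hudef, norm_smul, norm_inv, norm_norm]
    field_simp
  have hcard : Module.finrank ℝ (EuclideanSpace ℝ (Fin d)) = Fintype.card (Fin d) := by
    simp [finrank_euclideanSpace]
  have horth : Orthonormal ℝ (Set.restrict ({z0} : Set (Fin d)) (fun _ => u)) := by
    constructor
    · intro i
      exact hu
    · intro i j hij
      exact absurd (Subtype.ext (by
        have hi := i.2
        have hj := j.2
        simp only [Set.mem_singleton_iff] at hi hj
        rw [hi, hj])) hij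
  obtain ⟨b, hb⟩ := horth.exists_orthonormalBasis_extension_of_card_eq hcard
  have hbz0 : b z0 = u := hb z0 rfl
  set R := b.repr with hRdef
  have hRδ : R δ = t • EuclideanSpace.single z0 1 := by
    have hδu : δ = t • u := by
      rw [hudef, smul_smul, mul_inv_cancel₀ ht.ne', one_smul]
    rw [hδu, LinearIsometryEquiv.map_smul, ← hbz0, OrthonormalBasis.repr_self]
  set T : Set (EuclideanSpace ℝ (Fin d)) := ⇑(R.symm) ⁻¹' S with hTdef
  have hT : MeasurableSet T := hS.preimage R.symm.continuous.measurable
  have key1 : ∀ y : EuclideanSpace ℝ (Fin d), gaussPi d σ y S = gaussPi d σ (R y) T := by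
    intro y
    rw [← gaussPi_map_isometry hσ y R, Measure.map_apply R.continuous.measurable hT]
    congr 1
    ext z
    simp [hTdef]
  rw [key1 x] at h
  rw [key1 (x + δ), map_add, hRδ]
  set w : EuclideanSpace ℝ (Fin d) := R x + t • EuclideanSpace.single z0 1 with hwdef
  -- to the pi side
  set e := (MeasurableEquiv.toLp 2 (Fin d → ℝ)).symm with hedef
  set S' : Set (Fin d → ℝ) := ⇑e.symm ⁻¹' T with hS'def
  have hS' : MeasurableSet S' := hT.preimage e.symm.measurable
  have gapply : ∀ (y : EuclideanSpace ℝ (Fin d)),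
      gaussPi d σ y T = Measure.pi (fun i => gaussianReal (y i) ⟨σ^2, sq_nonneg σ⟩) S' := by
    intro y
    rw [gaussPi, MeasurableEquiv.map_apply]
    rfl
  haveI : IsProbabilityMeasure
      (Measure.pi (fun i => gaussianReal ((R x) i) ⟨σ^2, sq_nonneg σ⟩)) := by infer_instance
  have hEN : ENNReal.ofReal (stdNormalCDF a)
      ≤ Measure.pi (fun i => gaussianReal ((R x) i) ⟨σ^2, sq_nonneg σ⟩) S' := by
    rw [gapply] at h
    have := ENNReal.ofReal_le_ofReal h
    rwa [ENNReal.ofReal_toReal (measure_ne_top _ _)] at this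
  have hnp := np_core hd hσ (fun i => (R x) i) t ht.le S' hS' a hEN
  have hcoord : ∀ i : Fin d, w i = (R x) i + (if i = z0 then t else 0) := by
    intro i
    rw [hwdef]
    simp [EuclideanSpace.single_apply, mul_ite, PiLp.add_apply, PiLp.smul_apply]
  rw [gapply]
  have hmeq : (fun i => gaussianReal (w i) (⟨σ^2, sq_nonneg σ⟩ : ℝ≥0))
      = fun i => gaussianReal ((R x) i + (if i = z0 then t else 0)) ⟨σ^2, sq_nonneg σ⟩ := by
    funext i
    rw [hcoord i]
  rw [hmeq]
  have hfin : (Measure.pi (fun i => gaussianReal ((R x) i + (if i = z0 then t else 0))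
      (⟨σ^2, sq_nonneg σ⟩ : ℝ≥0))) S' ≠ ⊤ := measure_ne_top _ _
  have hnn : 0 ≤ stdNormalCDF (a - t/σ) := ENNReal.toReal_nonneg
  calc stdNormalCDF (a - t/σ)
      = (ENNReal.ofReal (stdNormalCDF (a - t/σ))).toReal := by
        rw [ENNReal.toReal_ofReal hnn]
    _ ≤ _ := ENNReal.toReal_mono hfin hnp
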